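/- arXiv:2011.10128 — 2 statements merged into one kernel-verified Lean document; each statement's English description precedes it below -/
import Mathlib

section
/- Partial sum formula S^k: for 0 ≤ k < n-1, Σ_{s=0}^{k} T_s = (Π_{t=r+k+1}^{r+n-1} x_j^{(t+1)}) (Π_{t=1}^{k} σ_{(n-1)(j-i)}^{(r-j+i+t)}(x_i,...,x_j)) P_k^{(r-j+i+k+1)}(x_i,...,x_j) (Π_{t=k+2}^{n-1} σ_{(n-1)(j-i)}^{(r-j+i+t)}(x_i,...,x_j)), where T_s := (Π_{t=r+s+1}^{r+n-1} x_j^{(t+1)}) (Π_{t=s+2}^{s+n-1} σ_{(n-1)(j-i)}^{(r-j+i+t)}(x_i,...,x_j)) σ_{(n-1)(j-i-1)}^{(r-j+i+s+1)}(x_i,...,x_{j-1}) (Π_{t=1}^{s} x_i^{(r-j+i+t)}). Upper indices mod n. -/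
open Finset

noncomputable section BirationalR

/-- A vector of reals with cyclically indexed coordinates (upper index mod `n`). -/
abbrev Vec (n : ℕ) := ZMod n → ℝ

/-- `κ_r(a,b) = Σ_{j=r}^{r+n-1} (Π_{k=r+1}^{j} b_k)(Π_{k=j+1}^{r+n-1} a_k)`, indices mod `n`. -/
def kappaF (n : ℕ) (r : ZMod n) (a b : Vec n) : ℝ :=
  ∑ d ∈ Finset.range n,
    (∏ t ∈ Finset.range d, b (r + 1 + (t : ℕ))) *
      ∏ t ∈ Finset.range (n - 1 - d), a (r + 1 + (d : ℕ) + (t : ℕ))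

/-- First component `b'` of the birational R-matrix `η(a,b) = (b',a')`:
`b'_i = b_{i+1} κ_{i+1}(a,b)/κ_i(a,b)`. -/
def etaB (n : ℕ) (a b : Vec n) : Vec n :=
  fun i => b (i + 1) * kappaF n (i + 1) a b / kappaF n i a b

/-- Second component `a'` of `η(a,b) = (b',a')`: `a'_i = a_{i-1} κ_{i-1}(a,b)/κ_i(a,b)`. -/
def etaA (n : ℕ) (a b : Vec n) : Vec n :=
  fun i => a (i - 1) * kappaF n (i - 1) a b / kappaF n i a b

/-- `η` applied to positions `(p, p+1)` of a tuple of vectors. -/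
def etaAt (n : ℕ) (p : ℕ) (X : ℕ → Vec n) : ℕ → Vec n :=
  fun q => if q = p then etaB n (X p) (X (p + 1))
    else if q = p + 1 then etaA n (X p) (X (p + 1)) else X q

/-- Action of the word `s_{w₁} s_{w₂} ⋯ s_{wₗ}` (rightmost acts first). -/
def applyWord (n : ℕ) (w : List ℕ) (X : ℕ → Vec n) : ℕ → Vec n :=
  w.foldr (etaAt n) X

/-- The tuple `(x_i, x_{i+1}, …, x_j)` as a list. -/
def seg {n : ℕ} (x : ℕ → Vec n) (i j : ℕ) : List (Vec n) :=
  (List.range (j + 1 - i)).map fun t => x (i + t)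

/-- `τ_k^{(r)}(x_1,…,x_m)`: sum over weakly increasing `i_1 ≤ … ≤ i_k`, no index used
more than `n-1` times, of `x_{i_1}^{(r)} x_{i_2}^{(r-1)} ⋯ x_{i_k}^{(r-k+1)}`.
Encoded via multiplicity functions; `τ = 0` for negative `k`. -/
def tauF (n : ℕ) (r : ZMod n) (k : ℤ) (x : List (Vec n)) : ℝ :=
  if 0 ≤ k then
    ∑ c ∈ (Fintype.piFinset fun _ : Fin x.length => Finset.range n).filter
        (fun c => ∑ i, c i = k.toNat),
      ∏ i : Fin x.length, ∏ β ∈ Finset.range (c i),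
        x.get i (r - (∑ i' ∈ Finset.univ.filter (fun i' => i' < i), c i' : ℕ) - (β : ℕ))
  else 0

/-- `σ_k^{(r)}(x_1,…,x_m) = Σ_{t=0}^{k} x_1^{(r)} ⋯ x_1^{(r-t+1)} τ_{k-t}^{(r-t)}(x_2,…,x_m)`. -/
def sigmaF (n : ℕ) (r : ZMod n) (k : ℕ) : List (Vec n) → ℝ
  | [] => if k = 0 then 1 else 0
  | y :: rest =>
      ∑ t ∈ Finset.range (k + 1),
        (∏ β ∈ Finset.range t, y (r - (β : ℕ))) * tauF n (r - (t : ℕ)) ((k : ℤ) - (t : ℤ)) rest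

/-- `σ̄_k^{(r)}(x_1,…,x_m) = Σ_{t=0}^{k} τ_{k-t}^{(r)}(x_1,…,x_{m-1}) x_m^{(r-k+t)} ⋯ x_m^{(r-k+1)}`. -/
def sigmaBarF (n : ℕ) (r : ZMod n) (k : ℕ) : List (Vec n) → ℝ
  | [] => if k = 0 then 1 else 0
  | y :: rest =>
      ∑ t ∈ Finset.range (k + 1),
        tauF n r ((k : ℤ) - (t : ℤ)) ((y :: rest).dropLast) *
          ∏ β ∈ Finset.range t,
            (y :: rest).getLast (List.cons_ne_nil y rest) (r - (k : ℕ) + 1 + (β : ℕ))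

/-- `Ω_k^{(r)}(x_i,…,x_j) = Σ_{ℓ=0}^{n-1} σ^{(r)}_{(n-1)(k-i)+ℓ}(x_i,…,x_k)
σ̄^{(r+k-i-ℓ)}_{(n-1)(j-k)-ℓ}(x_{k+1},…,x_j)`. -/
def OmegaF (n : ℕ) (r : ZMod n) (k i j : ℕ) (x : ℕ → Vec n) : ℝ :=
  ∑ ℓ ∈ Finset.range n,
    sigmaF n r ((n - 1) * (k - i) + ℓ) (seg x i k) *
      sigmaBarF n (r + (k : ℕ) - (i : ℕ) - (ℓ : ℕ)) ((n - 1) * (j - k) - ℓ) (seg x (k + 1) j)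

/-- `P_k^{(r)}(x_i,…,x_j) = Σ_{t=0}^{k} (Π_{s=0}^{t-1} x_i^{(r-s)})
σ_{(n-1)(j-i-1)}^{(r-t)}(x_i,…,x_{j-1}) (Π_{s=0}^{k-t-1} x_j^{(r-t+j-i-1-s)})`. -/
def PF (n : ℕ) (r : ZMod n) (k i j : ℕ) (x : ℕ → Vec n) : ℝ :=
  ∑ t ∈ Finset.range (k + 1),
    (∏ s ∈ Finset.range t, x i (r - (s : ℕ))) *
      sigmaF n (r - (t : ℕ)) ((n - 1) * (j - i - 1)) (seg x i (j - 1)) *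
      ∏ s ∈ Finset.range (k - t), x j (r - (t : ℕ) + (j : ℕ) - (i : ℕ) - 1 - (s : ℕ))

end BirationalR
section Tau
open Finset
variable {n : ℕ}

lemma tau_neg (r : ZMod n) {k : ℤ} (hk : k < 0) (z : List (Vec n)) : tauF n r k z = 0 := by
  simp [tauF, not_le.mpr hk]

lemma tau_nil (r : ZMod n) (k : ℤ) : tauF n r k [] = if k = 0 then 1 else 0 := by
  rcases le_or_gt 0 k with h | h
  · rw [tauF, if_pos h]
    rcases eq_or_lt_of_le h with h0 | h0
    · simp [← h0]
    · rw [if_neg (by omega)]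
      apply Finset.sum_eq_zero
      intro c hc
      simp only [Finset.mem_filter] at hc
      exfalso
      have := hc.2
      simp at this
      omega
  · rw [tau_neg r h, if_neg (by omega)]

lemma tau_vanish (r : ZMod n) {k : ℤ} (z : List (Vec n)) (hk : (((n-1) * z.length : ℕ) : ℤ) < k) :
    tauF n r k z = 0 := by
  have h0 : (0:ℤ) ≤ k := le_trans (by positivity) hk.le
  have hk' : ((n-1) * z.length : ℕ) < k.toNat := by omega
  rw [tauF, if_pos h0]
  apply Finset.sum_eq_zero
  intro c hc
  exfalso
  simp only [Finset.mem_filter] at hc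
  have hb : ∀ i, c i ≤ n - 1 := by
    intro i
    have := Fintype.mem_piFinset.mp hc.1 i
    simp only [Finset.mem_range] at this
    omega
  have hsum : ∑ i, c i ≤ (n-1) * z.length := by
    calc ∑ i, c i ≤ ∑ _i : Fin z.length, (n-1) := Finset.sum_le_sum (fun i _ => hb i)
    _ = (n-1) * z.length := by simp [mul_comm]
  have : k.toNat = ∑ i, c i := hc.2.symm
  omega

end Tau
section Tau2
open Finset
variable {n : ℕ}

lemma piSplit (L m : ℕ) (f : (Fin (L+1) → ℕ) → ℝ) :
    ∑ c ∈ (Fintype.piFinset fun _ : Fin (L+1) => Finset.range n).filter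
        (fun c => ∑ i, c i = m), f c
    = ∑ t ∈ Finset.range n, ∑ c ∈ (Fintype.piFinset fun _ : Fin L => Finset.range n).filter
        (fun c => t + ∑ i, c i = m), f (Fin.cons t c) := by
  simp only [Finset.sum_filter]
  rw [← Finset.sum_product']
  refine Finset.sum_nbij' (i := fun c => (c 0, Fin.tail c)) (j := fun p => Fin.cons p.1 p.2)
    ?_ ?_ ?_ ?_ ?_
  · intro c hc
    simp only [Fintype.mem_piFinset] at hc
    simp only [Finset.mem_product, Fintype.mem_piFinset]
    exact ⟨hc 0, fun q => hc q.succ⟩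
  · intro p hp
    simp only [Finset.mem_product, Fintype.mem_piFinset] at hp
    simp only [Fintype.mem_piFinset]
    intro q
    induction q using Fin.cases with
    | zero => simpa using hp.1
    | succ q => simpa using hp.2 q
  · intro c _; exact Fin.cons_self_tail c
  · intro p _; simp
  · intro c _
    rw [Fin.sum_univ_succ]
    simp only [Fin.tail]
    rw [Fin.cons_self_tail c]
    rfl

end Tau2
section Tau3
open Finset
variable {n : ℕ}

lemma tau_cons (r : ZMod n) (k : ℤ) (w : Vec n) (z : List (Vec n)) :
    tauF n r k (w :: z) = ∑ t ∈ Finset.range n,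
      (∏ s ∈ Finset.range t, w (r - (s:ℕ))) * tauF n (r - (t:ℕ)) (k - (t:ℕ)) z := by
  rcases lt_or_ge k 0 with hk | hk
  · rw [tau_neg r hk]
    refine (Finset.sum_eq_zero fun t _ => ?_).symm
    rw [tau_neg _ (by omega), mul_zero]
  · obtain ⟨m, rfl⟩ : ∃ m : ℕ, k = (m : ℤ) := ⟨k.toNat, (Int.toNat_of_nonneg hk).symm⟩
    rw [tauF, if_pos hk, Int.toNat_natCast]
    dsimp only [List.length_cons]
    rw [piSplit]
    refine Finset.sum_congr rfl fun t ht => ?_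
    rcases le_or_gt t m with htm | htm
    · rw [tauF, if_pos (by omega)]
      have h1 : ((m:ℤ) - (t:ℕ)).toNat = m - t := by omega
      rw [h1, Finset.mul_sum]
      have h2 : (Fintype.piFinset fun _ : Fin z.length => Finset.range n).filter
          (fun c => t + ∑ i, c i = m)
          = (Fintype.piFinset fun _ : Fin z.length => Finset.range n).filter
          (fun c => ∑ i, c i = m - t) := by
        apply Finset.filter_congr
        intro c _
        constructor <;> intro h <;> omega
      rw [h2]
      refine Finset.sum_congr rfl fun c hc => ?_
      rw [Fin.prod_univ_succ]
      congr 1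
      · simp only [Fin.cons_zero]
        have h3 : (Finset.univ.filter (fun i' : Fin (z.length+1) => i' < 0)) = ∅ := by
          apply Finset.filter_eq_empty_iff.mpr
          intro i _
          exact Fin.not_lt_zero i
        rw [h3]
        simp
        rfl
      · refine Finset.prod_congr rfl fun i _ => ?_
        simp only [Fin.cons_succ]
        have h4 : ∑ i' ∈ Finset.univ.filter (fun i' : Fin (z.length+1) => i' < i.succ),
            (Fin.cons t c : Fin (z.length+1) → ℕ) i'
            = t + ∑ i' ∈ Finset.univ.filter (fun i' : Fin z.length => i' < i), c i' := by
          rw [Finset.sum_filter, Finset.sum_filter, Fin.sum_univ_succ]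
          simp [Fin.succ_lt_succ_iff, Fin.succ_pos]
        rw [h4]
        refine Finset.prod_congr rfl fun β _ => ?_
        have h5 : (w :: z).get i.succ = z.get i := by simp
        rw [h5]
        congr 1
        push_cast
        ring
    · have h6 : (Fintype.piFinset fun _ : Fin z.length => Finset.range n).filter
          (fun c => t + ∑ i, c i = m) = ∅ := by
        apply Finset.filter_eq_empty_iff.mpr
        intro c _
        omega
      rw [h6, tau_neg _ (by omega), mul_zero, Finset.sum_empty]

end Tau3
section Tau4
open Finset
variable {n : ℕ}

lemma tau_concat (z : List (Vec n)) : ∀ (r : ZMod n) (k : ℤ) (y : Vec n),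
    tauF n r k (z ++ [y]) = ∑ d ∈ Finset.range n,
      tauF n r (k - (d:ℕ)) z * ∏ s ∈ Finset.range d, y (r - (k : ℤ) + (d:ℕ) - (s:ℕ)) := by
  induction z with
  | nil =>
    intro r k y
    rw [List.nil_append, tau_cons]
    refine Finset.sum_congr rfl fun t _ => ?_
    rw [tau_nil, tau_nil]
    rcases eq_or_ne (k - ((t:ℕ):ℤ)) 0 with h | h
    · rw [if_pos h, mul_one, one_mul]
      refine Finset.prod_congr rfl fun s _ => ?_
      congr 1
      rw [show k = ((t:ℕ):ℤ) by omega]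
      push_cast
      ring
    · rw [if_neg h, mul_zero, zero_mul]
  | cons w z ih =>
    intro r k y
    rw [List.cons_append, tau_cons]
    have step : ∀ t ∈ Finset.range n,
        (∏ s ∈ Finset.range t, w (r - (s:ℕ))) * tauF n (r - (t:ℕ)) (k - (t:ℕ)) (z ++ [y])
        = ∑ d ∈ Finset.range n, ((∏ s ∈ Finset.range t, w (r - (s:ℕ))) *
            tauF n (r - (t:ℕ)) (k - (d:ℕ) - (t:ℕ)) z) *
            ∏ s ∈ Finset.range d, y (r - (k : ℤ) + (d:ℕ) - (s:ℕ)) := by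
      intro t _
      rw [ih, Finset.mul_sum]
      refine Finset.sum_congr rfl fun d _ => ?_
      have e1 : k - (t:ℕ) - (d:ℕ) = k - (d:ℕ) - (t:ℕ) := by ring
      have e3 : (∏ s ∈ Finset.range d, y (r - (t:ℕ) - ((k - (t:ℕ) : ℤ)) + (d:ℕ) - (s:ℕ)))
          = ∏ s ∈ Finset.range d, y (r - (k : ℤ) + (d:ℕ) - (s:ℕ)) :=
        Finset.prod_congr rfl fun s _ => by
          congr 1
          push_cast
          ring
      rw [e1, e3, mul_assoc]
    rw [Finset.sum_congr rfl step, Finset.sum_comm]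
    refine Finset.sum_congr rfl fun d _ => ?_
    rw [← Finset.sum_mul]
    congr 1
    rw [tau_cons]

end Tau4
section Sigma1
open Finset
variable {n : ℕ}

lemma sigma_shift (hn : 2 ≤ n) (r : ZMod n) (w : Vec n) (z : List (Vec n)) (e : ℕ) :
    sigmaF n r ((n-1) * z.length + e) (w :: z)
    = (∏ s ∈ Finset.range e, w (r - (s:ℕ))) *
        sigmaF n (r - (e:ℕ)) ((n-1) * z.length) (w :: z) := by
  set K := (n-1) * z.length with hK
  rw [sigmaF, sigmaF, Finset.mul_sum]
  rw [show K + e + 1 = e + (K + 1) by ring, Finset.sum_range_add]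
  have hz2 : ∑ t ∈ Finset.range e,
      (∏ β ∈ Finset.range t, w (r - (β:ℕ))) * tauF n (r - (t:ℕ)) ((K + e : ℕ) - (t:ℤ)) z = 0 := by
    apply Finset.sum_eq_zero
    intro t ht
    simp only [Finset.mem_range] at ht
    rw [tau_vanish _ _ (by push_cast; omega), mul_zero]
  rw [hz2, zero_add]
  refine Finset.sum_congr rfl fun t _ => ?_
  rw [Finset.prod_range_add, mul_assoc]
  congr 1
  congr 1
  · refine Finset.prod_congr rfl fun s _ => ?_
    congr 1
    push_cast
    ring
  · congr 1
    · push_cast; ring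
    · push_cast; ring

lemma sigma_decomp (hn : 2 ≤ n) (r : ZMod n) (w y : Vec n) (z : List (Vec n)) (k : ℕ)
    (hk : n - 1 ≤ k) :
    sigmaF n r k (w :: (z ++ [y]))
    = ∑ d ∈ Finset.range n, sigmaF n r (k - d) (w :: z) *
        ∏ s ∈ Finset.range d, y (r - (k:ℕ) + (d:ℕ) - (s:ℕ)) := by
  rw [sigmaF]
  have step : ∀ t ∈ Finset.range (k+1),
      (∏ β ∈ Finset.range t, w (r - (β:ℕ))) * tauF n (r - (t:ℕ)) ((k:ℤ) - (t:ℕ)) (z ++ [y])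
      = ∑ d ∈ Finset.range n,
          ((∏ β ∈ Finset.range t, w (r - (β:ℕ))) * tauF n (r - (t:ℕ)) ((k:ℤ) - (d:ℕ) - (t:ℕ)) z)
          * ∏ s ∈ Finset.range d, y (r - (k:ℕ) + (d:ℕ) - (s:ℕ)) := by
    intro t _
    rw [tau_concat, Finset.mul_sum]
    refine Finset.sum_congr rfl fun d _ => ?_
    have e1 : (k:ℤ) - (t:ℕ) - (d:ℕ) = (k:ℤ) - (d:ℕ) - (t:ℕ) := by ring
    have e3 : (∏ s ∈ Finset.range d, y (r - (t:ℕ) - (((k:ℤ) - (t:ℕ) : ℤ)) + (d:ℕ) - (s:ℕ)))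
        = ∏ s ∈ Finset.range d, y (r - (k:ℕ) + (d:ℕ) - (s:ℕ)) :=
      Finset.prod_congr rfl fun s _ => by
        congr 1
        push_cast
        ring
    rw [e1, e3, mul_assoc]
  rw [Finset.sum_congr rfl step, Finset.sum_comm]
  refine Finset.sum_congr rfl fun d hd => ?_
  rw [← Finset.sum_mul]
  congr 1
  rw [sigmaF]
  simp only [Finset.mem_range] at hd
  have hdk : d ≤ k := by omega
  rw [show k + 1 = (k - d + 1) + d by omega, Finset.sum_range_add]
  have hz2 : ∑ t ∈ Finset.range d,
      (∏ β ∈ Finset.range (k - d + 1 + t), w (r - (β:ℕ))) *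
        tauF n (r - ((k - d + 1 + t : ℕ):ℕ)) ((k:ℤ) - (d:ℕ) - ((k - d + 1 + t : ℕ):ℕ)) z = 0 := by
    apply Finset.sum_eq_zero
    intro t ht
    rw [tau_neg _ (by push_cast; omega), mul_zero]
  rw [hz2, add_zero]
  refine Finset.sum_congr rfl fun t _ => ?_
  have hcast : ((k - d : ℕ) : ℤ) = (k:ℤ) - (d:ℕ) := by omega
  rw [hcast]

end Sigma1
section SegPF
open Finset
variable {n : ℕ}

lemma seg_length (x : ℕ → Vec n) (i j : ℕ) : (seg x i j).length = j + 1 - i := by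
  simp [seg]

lemma seg_cons (x : ℕ → Vec n) {i j : ℕ} (h : i ≤ j) :
    seg x i j = x i :: seg x (i+1) j := by
  unfold seg
  rw [show j + 1 - i = (j - i) + 1 by omega, List.range_succ_eq_map, List.map_cons,
    List.map_map, show j + 1 - (i+1) = j - i by omega]
  congr 1
  apply List.map_congr_left
  intro a _
  simp only [Function.comp_apply]
  have : i + a.succ = i + 1 + a := by omega
  rw [this]

lemma seg_append (x : ℕ → Vec n) {i j : ℕ} (h : i ≤ j) (hj : 1 ≤ j) :
    seg x i j = seg x i (j-1) ++ [x j] := by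
  unfold seg
  rw [show j + 1 - i = (j - i) + 1 by omega, List.range_succ, List.map_append,
    show j - 1 + 1 - i = j - i by omega]
  congr 1
  simp only [List.map_cons, List.map_nil]
  have : i + (j - i) = j := by omega
  rw [this]

lemma PF_zero (x : ℕ → Vec n) (i j : ℕ) (r : ZMod n) :
    PF n r 0 i j x = sigmaF n r ((n-1)*(j-i-1)) (seg x i (j-1)) := by
  simp [PF]

lemma PF_R1 (x : ℕ → Vec n) (i j : ℕ) (k : ℕ) (r : ZMod n) :
    PF n r (k+1) i j x = x j (r + (j:ℕ) - (i:ℕ) - 1 - (k:ℕ)) * PF n r k i j x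
      + (∏ s ∈ Finset.range (k+1), x i (r - (s:ℕ))) *
        sigmaF n (r - ((k+1 : ℕ):ℕ)) ((n-1)*(j-i-1)) (seg x i (j-1)) := by
  rw [PF, Finset.sum_range_succ, PF, Finset.mul_sum]
  rw [show k + 1 - (k+1) = 0 by omega]
  simp only [Finset.range_zero, Finset.prod_empty, mul_one]
  congr 1
  refine Finset.sum_congr rfl fun t ht => ?_
  simp only [Finset.mem_range] at ht
  rw [show k + 1 - t = (k - t) + 1 by omega, Finset.prod_range_succ]
  have e1 : r - (t:ℕ) + (j:ℕ) - (i:ℕ) - 1 - ((k-t : ℕ):ℕ) = r + (j:ℕ) - (i:ℕ) - 1 - (k:ℕ) := by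
    rw [Nat.cast_sub (by omega : t ≤ k)]
    ring
  rw [e1]
  ring

lemma PF_R1' (x : ℕ → Vec n) (i j : ℕ) (k : ℕ) (r : ZMod n) :
    PF n r (k+1) i j x = x i r * PF n (r - 1) k i j x
      + sigmaF n r ((n-1)*(j-i-1)) (seg x i (j-1)) *
          ∏ s ∈ Finset.range (k+1), x j (r + (j:ℕ) - (i:ℕ) - 1 - (s:ℕ)) := by
  rw [PF, Finset.sum_range_succ', PF, Finset.mul_sum]
  congr 1
  · refine Finset.sum_congr rfl fun t ht => ?_
    rw [Finset.prod_range_succ']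
    have e2 : ∀ s : ℕ, r - ((s+1 : ℕ):ℕ) = r - 1 - (s:ℕ) := by
      intro s; push_cast; ring
    rw [show (k + 1) - (t + 1) = k - t by omega]
    simp only [e2]
    simp only [Nat.cast_zero, sub_zero]
    ring
  · simp only [Nat.cast_zero, sub_zero, Nat.sub_zero, Finset.range_zero, Finset.prod_empty,
      one_mul]

lemma sigma_top (hn : 2 ≤ n) (x : ℕ → Vec n) {i j : ℕ} (hij : i < j) (r : ZMod n) :
    sigmaF n r ((n-1)*(j-i)) (seg x i j) = PF n r (n-1) i j x := by
  have hij1 : i ≤ j - 1 := by omega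
  have hKK : (n-1)*(j-i) = (n-1)*(j-i-1) + (n-1) := by
    conv_lhs => rw [show j - i = (j-i-1) + 1 by omega]
    ring
  have hK : n - 1 ≤ (n-1)*(j-i) := by rw [hKK]; omega
  have hlen : (seg x (i+1) (j-1)).length = j - i - 1 := by rw [seg_length]; omega
  have h1 : seg x i j = x i :: (seg x (i+1) (j-1) ++ [x j]) := by
    rw [seg_cons x hij.le, seg_append x (by omega : i + 1 ≤ j) (by omega : 1 ≤ j)]
  rw [h1, sigma_decomp hn r _ _ _ _ hK]
  rw [PF, show (n-1)+1 = n by omega, ← Finset.sum_range_reflect]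
  refine Finset.sum_congr rfl fun t ht => ?_
  simp only [Finset.mem_range] at ht
  have ht' : t ≤ n - 1 := by omega
  have e1 : (n-1)*(j-i) - (n - 1 - t) = (n-1) * (seg x (i+1) (j-1)).length + t := by
    rw [hlen]
    rw [hKK]
    set A := (n-1)*(j-i-1)
    omega
  rw [e1, sigma_shift hn, hlen, ← seg_cons x hij1]
  have c1 : ((((n-1)*(j-i)) : ℕ) : ZMod n) = (i:ℕ) - (j:ℕ) := by
    rw [Nat.cast_mul, Nat.cast_sub (by omega : 1 ≤ n), Nat.cast_sub hij.le, ZMod.natCast_self]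
    ring
  have c2 : (((n-1-t) : ℕ) : ZMod n) = -1 - (t:ℕ) := by
    rw [Nat.cast_sub ht', Nat.cast_sub (by omega : 1 ≤ n), ZMod.natCast_self]
    ring
  have e6 : (∏ s ∈ Finset.range (n-1-t),
        x j (r - (((n-1)*(j-i) : ℕ):ℕ) + ((n-1-t : ℕ):ℕ) - (s:ℕ)))
      = ∏ s ∈ Finset.range (n-1-t), x j (r - (t:ℕ) + (j:ℕ) - (i:ℕ) - 1 - (s:ℕ)) := by
    refine Finset.prod_congr rfl fun s _ => ?_
    rw [c1, c2]
    ring_nf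
  rw [e6]

end SegPF
section IdC
open Finset
variable {n : ℕ}

lemma prod_range_eq_univ (hn : 2 ≤ n) (v : Vec n) (μ : ZMod n) :
    ∏ s ∈ Finset.range n, v (μ - (s:ℕ)) = ∏ c ∈ (@Finset.univ (ZMod n) (@ZMod.fintype n ⟨by omega⟩)), v c := by
  haveI : NeZero n := ⟨by omega⟩
  refine Finset.prod_nbij' (i := fun s => μ - (s:ℕ)) (j := fun c => (μ - c).val)
    (fun a _ => Finset.mem_univ _) (fun c _ => Finset.mem_range.mpr (ZMod.val_lt _))
    ?_ ?_ (fun a _ => rfl)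
  · intro s hs
    simp only [Finset.mem_range] at hs
    have : μ - (μ - (s:ℕ)) = ((s:ℕ) : ZMod n) := by ring
    rw [this, ZMod.val_natCast_of_lt hs]
  · intro c _
    rw [ZMod.natCast_rightInverse (μ - c)]
    ring

lemma prod_range_cycle (hn : 2 ≤ n) (v : Vec n) (μ ν : ZMod n) :
    ∏ s ∈ Finset.range n, v (μ - (s:ℕ)) = ∏ s ∈ Finset.range n, v (ν - (s:ℕ)) := by
  rw [prod_range_eq_univ hn v μ, prod_range_eq_univ hn v ν]

lemma idC (hn : 2 ≤ n) (x : ℕ → Vec n) {i j : ℕ} (hij : i < j) (μ : ZMod n) :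
    x i μ * sigmaF n (μ - 1) ((n-1)*(j-i)) (seg x i j)
      - x j (μ + (j:ℕ) - (i:ℕ)) * sigmaF n μ ((n-1)*(j-i)) (seg x i j)
    = sigmaF n μ ((n-1)*(j-i-1)) (seg x i (j-1)) *
        ((∏ s ∈ Finset.range n, x i ((0:ZMod n) - (s:ℕ))) - (∏ s ∈ Finset.range n, x j ((0:ZMod n) - (s:ℕ)))) := by
  have hb : sigmaF n μ ((n-1)*(j-i)) (seg x i j)
      = x i μ * PF n (μ - 1) (n-2) i j x
        + sigmaF n μ ((n-1)*(j-i-1)) (seg x i (j-1)) *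
            ∏ s ∈ Finset.range (n-1), x j (μ + (j:ℕ) - (i:ℕ) - 1 - (s:ℕ)) := by
    rw [sigma_top hn x hij μ]
    conv_lhs => rw [show n - 1 = (n-2) + 1 by omega]
    rw [PF_R1']
    rw [show (n-2) + 1 = n - 1 by omega]
  have ha : sigmaF n (μ - 1) ((n-1)*(j-i)) (seg x i j)
      = x j (μ + (j:ℕ) - (i:ℕ)) * PF n (μ - 1) (n-2) i j x
        + (∏ s ∈ Finset.range (n-1), x i (μ - 1 - (s:ℕ))) *
            sigmaF n μ ((n-1)*(j-i-1)) (seg x i (j-1)) := by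
    rw [sigma_top hn x hij (μ - 1)]
    conv_lhs => rw [show n - 1 = (n-2) + 1 by omega]
    rw [PF_R1]
    have c2 : (((n-2) : ℕ) : ZMod n) = -2 := by
      rw [Nat.cast_sub (by omega : 2 ≤ n), ZMod.natCast_self]
      ring
    have c3 : (((n-2)+1 : ℕ) : ZMod n) = -1 := by
      push_cast [c2]
      ring
    rw [show (n-2) + 1 = n - 1 by omega] at c3 ⊢
    have e1 : μ - 1 + (j:ℕ) - (i:ℕ) - 1 - ((n-2 : ℕ):ℕ) = μ + (j:ℕ) - (i:ℕ) := by
      rw [c2]; ring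
    have e2 : μ - 1 - ((n-1 : ℕ):ℕ) = μ := by
      rw [c3]; ring
    rw [e1, e2]
  have hNi : x i μ * ∏ s ∈ Finset.range (n-1), x i (μ - 1 - (s:ℕ)) = ∏ s ∈ Finset.range n, x i ((0:ZMod n) - (s:ℕ)) := by
    rw [← prod_range_cycle hn (x i) μ 0]
    have h0 := Finset.prod_range_succ' (fun s => x i (μ - (s:ℕ))) (n-1)
    rw [show (n-1)+1 = n by omega] at h0
    rw [h0]
    have ecast : ∀ s : ℕ, μ - ((s+1 : ℕ):ℕ) = μ - 1 - (s:ℕ) := by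
      intro s; push_cast; ring
    simp only [ecast, Nat.cast_zero, sub_zero]
    ring
  have hNj : x j (μ + (j:ℕ) - (i:ℕ)) *
      ∏ s ∈ Finset.range (n-1), x j (μ + (j:ℕ) - (i:ℕ) - 1 - (s:ℕ)) = ∏ s ∈ Finset.range n, x j ((0:ZMod n) - (s:ℕ)) := by
    rw [← prod_range_cycle hn (x j) (μ + (j:ℕ) - (i:ℕ)) 0]
    have h0 := Finset.prod_range_succ' (fun s => x j (μ + (j:ℕ) - (i:ℕ) - (s:ℕ))) (n-1)
    rw [show (n-1)+1 = n by omega] at h0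
    rw [h0]
    have ecast : ∀ s : ℕ, μ + (j:ℕ) - (i:ℕ) - ((s+1 : ℕ):ℕ)
        = μ + (j:ℕ) - (i:ℕ) - 1 - (s:ℕ) := by
      intro s; push_cast; ring
    simp only [ecast, Nat.cast_zero, sub_zero]
    ring
  rw [ha, hb, ← hNi, ← hNj]
  ring

end IdC
section LW
open Finset
variable {n : ℕ}

lemma lemL (hn : 2 ≤ n) (x : ℕ → Vec n) {i j : ℕ} (hij : i < j) (k : ℕ) :
    ∀ ρ : ZMod n,
    PF n (ρ - 1) k i j x *
        ((∏ s ∈ Finset.range n, x i ((0:ZMod n) - (s:ℕ)))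
          - ∏ s ∈ Finset.range n, x j ((0:ZMod n) - (s:ℕ)))
      + sigmaF n (ρ - 1) ((n-1)*(j-i)) (seg x i j) *
          ∏ s ∈ Finset.range (k+1), x j (ρ + (j:ℕ) - (i:ℕ) - 1 - (s:ℕ))
    = sigmaF n (ρ - ((k+2 : ℕ):ℕ)) ((n-1)*(j-i)) (seg x i j) *
        ∏ s ∈ Finset.range (k+1), x i (ρ - 1 - (s:ℕ)) := by
  induction k with
  | zero =>
    intro ρ
    have hc := idC hn x hij (ρ - 1)
    rw [PF_zero, Finset.prod_range_one, Finset.prod_range_one]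
    rw [show ρ - ((0+2 : ℕ):ℕ) = ρ - 1 - 1 by push_cast; ring]
    rw [show ρ + (j:ℕ) - (i:ℕ) - 1 - ((0:ℕ):ZMod n) = ρ - 1 + (j:ℕ) - (i:ℕ) by push_cast; ring]
    rw [show ρ - 1 - ((0:ℕ):ZMod n) = ρ - 1 by push_cast; ring]
    linear_combination -hc
  | succ k ih =>
    intro ρ
    have ihρ := ih ρ
    have hc := idC hn x hij (ρ - 1 - ((k+1 : ℕ):ℕ))
    have r1 := PF_R1 x i j k (ρ - 1)
    rw [show ρ - 1 + (j:ℕ) - (i:ℕ) - 1 - ((k : ℕ):ZMod n)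
        = ρ + (j:ℕ) - (i:ℕ) - 1 - ((k+1 : ℕ):ℕ) by push_cast; ring] at r1
    rw [show ρ - 1 - ((k+1 : ℕ):ZMod n) + (j:ℕ) - (i:ℕ)
        = ρ + (j:ℕ) - (i:ℕ) - 1 - ((k+1 : ℕ):ℕ) by push_cast; ring] at hc
    rw [show ρ - ((k+2 : ℕ):ℕ) = ρ - 1 - ((k+1 : ℕ):ℕ) by push_cast; ring] at ihρ
    rw [Finset.prod_range_succ (fun s : ℕ => x j (ρ + (j:ℕ) - (i:ℕ) - 1 - (s:ℕ))) (k+1),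
      Finset.prod_range_succ (fun s : ℕ => x i (ρ - 1 - (s:ℕ))) (k+1), r1]
    rw [show ρ - ((k+1+2 : ℕ):ℕ) = ρ - 1 - ((k+1 : ℕ):ℕ) - 1 by push_cast; ring]
    linear_combination (x j (ρ + (j:ℕ) - (i:ℕ) - 1 - ((k+1 : ℕ):ℕ))) * ihρ
      - (∏ s ∈ Finset.range (k+1), x i (ρ - 1 - (s:ℕ))) * hc

lemma lemW (hn : 2 ≤ n) (x : ℕ → Vec n) {i j : ℕ} (hij : i < j) (k : ℕ) (ρ : ZMod n) :
    sigmaF n (ρ - 1) ((n-1)*(j-i)) (seg x i j) * PF n ρ (k+1) i j x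
    = x j (ρ + (j:ℕ) - (i:ℕ)) *
        (PF n (ρ - 1) k i j x * sigmaF n ρ ((n-1)*(j-i)) (seg x i j))
      + sigmaF n (ρ - ((k+2 : ℕ):ℕ)) ((n-1)*(j-i)) (seg x i j) *
          sigmaF n ρ ((n-1)*(j-i-1)) (seg x i (j-1)) *
          ∏ s ∈ Finset.range (k+1), x i (ρ - 1 - (s:ℕ)) := by
  have hc := idC hn x hij ρ
  have hl := lemL hn x hij k ρ
  rw [PF_R1']
  linear_combination (PF n (ρ - 1) k i j x) * hc
    + (sigmaF n ρ ((n-1)*(j-i-1)) (seg x i (j-1))) * hl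

end LW

/-- The summand `T_s = (Π_{t=r+s+1}^{r+n-1} x_j^{(t+1)})
(Π_{t=s+2}^{s+n-1} σ_{(n-1)(j-i)}^{(r-j+i+t)}(x_i,…,x_j))
σ_{(n-1)(j-i-1)}^{(r-j+i+s+1)}(x_i,…,x_{j-1}) (Π_{t=1}^{s} x_i^{(r-j+i+t)})`. -/
noncomputable def TF (n : ℕ) (r : ZMod n) (i j : ℕ) (x : ℕ → Vec n) (s : ℕ) : ℝ :=
  (∏ u ∈ Finset.range (n - 1 - s), x j (r + (s : ℕ) + 1 + (u : ℕ) + 1)) *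
    (∏ u ∈ Finset.range (n - 2),
      sigmaF n (r - (j : ℕ) + (i : ℕ) + ((s : ℕ) + 2 + (u : ℕ))) ((n - 1) * (j - i)) (seg x i j)) *
    sigmaF n (r - (j : ℕ) + (i : ℕ) + (s : ℕ) + 1) ((n - 1) * (j - i - 1)) (seg x i (j - 1)) *
    ∏ u ∈ Finset.range s, x i (r - (j : ℕ) + (i : ℕ) + ((u : ℕ) + 1))

/-- partial sum formula `S^k = Σ_{s=0}^{k} T_s` for `0 ≤ k < n-1`. -/
theorem T_partial_sum (n : ℕ) (hn : 2 ≤ n) (x : ℕ → Vec n) (hx : ∀ p r, 0 < x p r)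
    (i j : ℕ) (hi : 1 ≤ i) (hij : i < j) (k : ℕ) (hk : k < n - 1) (r : ZMod n) :
    ∑ s ∈ Finset.range (k + 1), TF n r i j x s =
      (∏ u ∈ Finset.range (n - 1 - k), x j (r + (k : ℕ) + 1 + (u : ℕ) + 1)) *
        (∏ t ∈ Finset.range k,
          sigmaF n (r - (j : ℕ) + (i : ℕ) + ((t : ℕ) + 1)) ((n - 1) * (j - i)) (seg x i j)) *
        PF n (r - (j : ℕ) + (i : ℕ) + (k : ℕ) + 1) k i j x *
        ∏ t ∈ Finset.range (n - 2 - k),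
          sigmaF n (r - (j : ℕ) + (i : ℕ) + ((k : ℕ) + 2 + (t : ℕ))) ((n - 1) * (j - i))
            (seg x i j) := by
  revert hk
  induction k with
  | zero =>
    intro hk
    simp only [zero_add]
    rw [Finset.sum_range_one, TF, PF_zero]
    simp only [Nat.sub_zero, Finset.range_zero, Finset.prod_empty]
    ring
  | succ k ih =>
    intro hk
    rw [Finset.sum_range_succ, ih (by omega), TF]
    have hw := lemW hn x hij k (r - (j:ℕ) + (i:ℕ) + ((k+1 : ℕ) : ZMod n) + 1)
    rw [show (r - (j:ℕ) + (i:ℕ) + ((k+1 : ℕ) : ZMod n) + 1 - 1 : ZMod n)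
        = r - (j:ℕ) + (i:ℕ) + (k:ℕ) + 1 by push_cast; ring] at hw
    rw [show (r - (j:ℕ) + (i:ℕ) + ((k+1 : ℕ) : ZMod n) + 1 + (j:ℕ) - (i:ℕ) : ZMod n)
        = r + ((k+1 : ℕ) : ZMod n) + 1 by push_cast; ring] at hw
    rw [show (r - (j:ℕ) + (i:ℕ) + ((k+1 : ℕ) : ZMod n) + 1 - ((k+2 : ℕ) : ZMod n) : ZMod n)
        = r - (j:ℕ) + (i:ℕ) by push_cast; ring] at hw
    have hxi : (∏ s ∈ Finset.range (k+1), x i (r - (j:ℕ) + (i:ℕ) + (k:ℕ) + 1 - (s:ℕ)))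
        = ∏ u ∈ Finset.range (k+1), x i (r - (j:ℕ) + (i:ℕ) + ((u:ℕ) + 1)) := by
      conv_rhs => rw [← Finset.prod_range_reflect]
      refine Finset.prod_congr rfl fun s hs => ?_
      simp only [Finset.mem_range] at hs
      congr 1
      rw [show k + 1 - 1 - s = k - s by omega, Nat.cast_sub (by omega : s ≤ k)]
      push_cast
      ring
    rw [hxi] at hw
    have hA : (∏ u ∈ Finset.range (n-1-k), x j (r + (k:ℕ) + 1 + (u:ℕ) + 1))
        = (∏ u ∈ Finset.range (n-1-(k+1)), x j (r + ((k+1:ℕ):ℕ) + 1 + (u:ℕ) + 1)) *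
            x j (r + ((k+1 : ℕ) : ZMod n) + 1) := by
      rw [show n-1-k = (n-1-(k+1))+1 by omega, Finset.prod_range_succ']
      congr 1
      · refine Finset.prod_congr rfl fun u _ => ?_
        congr 1
        push_cast
        ring
      · congr 1
        push_cast
        ring
    have hB : (∏ t ∈ Finset.range (n-2-k),
          sigmaF n (r - (j:ℕ) + (i:ℕ) + ((k:ℕ) + 2 + (t:ℕ))) ((n-1)*(j-i)) (seg x i j))
        = (∏ t ∈ Finset.range (n-2-(k+1)),
            sigmaF n (r - (j:ℕ) + (i:ℕ) + (((k+1:ℕ):ℕ) + 2 + (t:ℕ))) ((n-1)*(j-i)) (seg x i j)) *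
          sigmaF n (r - (j:ℕ) + (i:ℕ) + ((k+1 : ℕ) : ZMod n) + 1) ((n-1)*(j-i)) (seg x i j) := by
      rw [show n-2-k = (n-2-(k+1))+1 by omega, Finset.prod_range_succ']
      congr 1
      · refine Finset.prod_congr rfl fun t _ => ?_
        congr 1
        push_cast
        ring
      · congr 1
        push_cast
        ring
    have hT3 : (∏ t ∈ Finset.range (k+1),
          sigmaF n (r - (j:ℕ) + (i:ℕ) + ((t:ℕ) + 1)) ((n-1)*(j-i)) (seg x i j))
        = (∏ t ∈ Finset.range k,
            sigmaF n (r - (j:ℕ) + (i:ℕ) + ((t:ℕ) + 1)) ((n-1)*(j-i)) (seg x i j)) *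
          sigmaF n (r - (j:ℕ) + (i:ℕ) + (k:ℕ) + 1) ((n-1)*(j-i)) (seg x i j) := by
      rw [Finset.prod_range_succ]
      congr 2
      ring
    have hM : (∏ u ∈ Finset.range (n-2),
          sigmaF n (r - (j:ℕ) + (i:ℕ) + (((k+1:ℕ):ℕ) + 2 + (u:ℕ))) ((n-1)*(j-i)) (seg x i j))
        = ((∏ t ∈ Finset.range (n-2-(k+1)),
            sigmaF n (r - (j:ℕ) + (i:ℕ) + (((k+1:ℕ):ℕ) + 2 + (t:ℕ))) ((n-1)*(j-i)) (seg x i j)) *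
           ∏ t ∈ Finset.range k,
            sigmaF n (r - (j:ℕ) + (i:ℕ) + ((t:ℕ) + 1)) ((n-1)*(j-i)) (seg x i j)) *
          sigmaF n (r - (j:ℕ) + (i:ℕ)) ((n-1)*(j-i)) (seg x i j) := by
      conv_lhs => rw [show n-2 = (n-2-(k+1))+(k+1) by omega]
      rw [Finset.prod_range_add, mul_assoc]
      congr 1
      rw [Finset.prod_range_succ']
      congr 1
      · refine Finset.prod_congr rfl fun v _ => ?_
        congr 1
        rw [show n-2-(k+1) + (v+1) = (v+1) + (n - (k+3)) by omega]
        have hcs : ((n - (k+3) : ℕ) : ZMod n) = ((n:ℕ) : ZMod n) - ((k+3 : ℕ) : ZMod n) :=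
          Nat.cast_sub (by omega)
        push_cast [hcs, ZMod.natCast_self]
        ring
      · congr 1
        rw [show n-2-(k+1) + 0 = n - (k+3) by omega]
        have hcs : ((n - (k+3) : ℕ) : ZMod n) = ((n:ℕ) : ZMod n) - ((k+3 : ℕ) : ZMod n) :=
          Nat.cast_sub (by omega)
        push_cast [hcs, ZMod.natCast_self]
        ring
    rw [hA, hB, hT3, hM]
    linear_combination (-((∏ u ∈ Finset.range (n-1-(k+1)), x j (r + ((k+1:ℕ):ℕ) + 1 + (u:ℕ) + 1)) *
      (∏ t ∈ Finset.range k,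
        sigmaF n (r - (j:ℕ) + (i:ℕ) + ((t:ℕ) + 1)) ((n-1)*(j-i)) (seg x i j)) *
      (∏ t ∈ Finset.range (n-2-(k+1)),
        sigmaF n (r - (j:ℕ) + (i:ℕ) + (((k+1:ℕ):ℕ) + 2 + (t:ℕ))) ((n-1)*(j-i)) (seg x i j)))) * hw
end

section
/- Expansion of P: P_{n-k}^{(r-j+i)}(x_i,...,x_j) = P_{n-k-1}^{(r-j+i)}(x_i,...,x_j) x_j^{(r+k)} + (Π_{t=0}^{n-k-1} x_i^{(r-j+i-t)}) σ_{(n-1)(j-i-1)}^{(r-j+i+k)}(x_i,...,x_{j-1}), for 1 ≤ k ≤ n-1, with upper indices mod n. -/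
open Finset

/-- expansion of `P`:
`P_{n-k}^{(r-j+i)} = P_{n-k-1}^{(r-j+i)} x_j^{(r+k)} +
(Π_{t=0}^{n-k-1} x_i^{(r-j+i-t)}) σ_{(n-1)(j-i-1)}^{(r-j+i+k)}(x_i,…,x_{j-1})`. -/
theorem P_expansion (n : ℕ) (hn : 2 ≤ n) (x : ℕ → Vec n) (hx : ∀ p r, 0 < x p r)
    (i j : ℕ) (hi : 1 ≤ i) (hij : i < j) (k : ℕ) (hk1 : 1 ≤ k) (hk2 : k ≤ n - 1)
    (r : ZMod n) :
    PF n (r - (j : ℕ) + (i : ℕ)) (n - k) i j x =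
      PF n (r - (j : ℕ) + (i : ℕ)) (n - k - 1) i j x * x j (r + (k : ℕ)) +
        (∏ t ∈ Finset.range (n - k), x i (r - (j : ℕ) + (i : ℕ) - (t : ℕ))) *
          sigmaF n (r - (j : ℕ) + (i : ℕ) + (k : ℕ)) ((n - 1) * (j - i - 1))
            (seg x i (j - 1)) := by
  have hkn : k ≤ n := le_trans hk2 (Nat.sub_le n 1)
  have hnk : 1 ≤ n - k := by omega
  unfold PF
  rw [Finset.sum_range_succ]
  have h1 : n - k - 1 + 1 = n - k := by omega
  rw [h1, Finset.sum_mul]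
  congr 1
  · apply Finset.sum_congr rfl
    intro t ht
    simp only [Finset.mem_range] at ht
    have h2 : n - k - t = (n - k - 1 - t) + 1 := by omega
    rw [h2, Finset.prod_range_succ]
    have h3 : ((n - k - 1 - t : ℕ) : ZMod n) = -(k : ZMod n) - t - 1 := by
      have h : n - k - 1 - t = n - (k + t + 1) := by omega
      rw [h, Nat.cast_sub (by omega), ZMod.natCast_self]
      push_cast
      ring
    have h4 : x j (r - (j:ℕ) + (i:ℕ) - (t:ℕ) + (j:ℕ) - (i:ℕ) - 1 - ((n - k - 1 - t : ℕ) : ZMod n))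
        = x j (r + (k:ℕ)) := by
      rw [h3]; ring_nf
    rw [h4]; ring
  · rw [Nat.sub_self, Finset.prod_range_zero, mul_one]
    have h3 : ((n - k : ℕ) : ZMod n) = -(k : ZMod n) := by
      rw [Nat.cast_sub hkn, ZMod.natCast_self]; ring
    rw [h3, sub_neg_eq_add]
end
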